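/- For every k ≥ 2, MEMB_k is hard for kSDA under logarithmic-space many-one reductions, and hence hard for LOGkSDA: every language L ∈ kSDA satisfies L ≤^L_m MEMB_k. -/

import Mathlib

/-!
Formalization infrastructure for depth-`k` storage automata (k-sda's),
following T. Yamakami, "Between SC and LOGDCFL: Families of Languages
Accepted by Logarithmic-Space Deterministic Auxiliary Depth-k Storage
Automata".
-/

namespace SDAP

/-- Head directions. -/
inductive Dir | left | stay | right
deriving DecidableEq

/-- Input-tape symbols: the two endmarkers `▷`, `◁` or a genuine symbol. -/
inductive InSym (α : Type) | lend | rend | sym (a : α)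

/-- Move a head position on a semi-infinite tape (clamped at `0`). -/
def moveNat (p : ℕ) : Dir → ℕ
  | Dir.left => p - 1
  | Dir.stay => p
  | Dir.right => p + 1

/-- Move the input head, clamped to the segment `[0, n+1]` holding `▷ x ◁`. -/
def moveIn (n p : ℕ) (d : Dir) : ℕ := min (moveNat p d) (n + 1)

/-- Symbol at position `i` of the input tape holding `▷ x ◁`. -/
def inAt {α : Type} (x : List α) (i : ℕ) : InSym α :=
  if i = 0 then InSym.lend
  else if h : i - 1 < x.length then InSym.sym (x.get ⟨i - 1, h⟩)
  else InSym.rend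

/-! ### One-way deterministic depth-`k` storage automata (k-sda's) -/

/-- Output of one transition of a k-sda. -/
structure SDAOut (Q G : ℕ) where
  st : Fin Q
  wr : Fin G
  dIn : Dir
  dSt : Dir

/-- A one-way deterministic depth-`k` storage automaton: a read-once input
tape and a depth-`k` storage tape with storage alphabet `Fin G` graded by
the depth function `dv`. -/
structure SDA (k : ℕ) (α : Type) where
  Q : ℕ
  G : ℕ
  dv : Fin G → ℕ
  box : Fin G      -- the initial blank `□`, depth 0
  blank : Fin G    -- the frozen blank `B`, depth k
  lend : Fin G     -- the left endmarker `▷` of the storage tape, depth k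
  q0 : Fin Q
  qacc : Finset (Fin Q)
  qrej : Finset (Fin Q)
  δ : Fin Q → InSym α → Fin G → SDAOut Q G

namespace SDA

variable {k : ℕ} {α : Type}

structure Cfg (M : SDA k α) where
  st : Fin M.Q
  ip : ℕ
  sp : ℕ
  tape : ℕ → Fin M.G

def init (M : SDA k α) : M.Cfg :=
  ⟨M.q0, 0, 0, fun i => if i = 0 then M.lend else M.box⟩

def Halted (M : SDA k α) (c : M.Cfg) : Prop := c.st ∈ M.qacc ∨ c.st ∈ M.qrej

def step (M : SDA k α) (x : List α) (c : M.Cfg) : M.Cfg :=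
  if c.st ∈ M.qacc ∨ c.st ∈ M.qrej then c
  else
    let t := M.δ c.st (inAt x c.ip) (c.tape c.sp)
    ⟨t.st, moveIn x.length c.ip t.dIn, moveNat c.sp t.dSt,
      Function.update c.tape c.sp t.wr⟩

def run (M : SDA k α) (x : List α) (t : ℕ) : M.Cfg := (M.step x)^[t] M.init

def Accepts (M : SDA k α) (x : List α) : Prop := ∃ t, (M.run x t).st ∈ M.qacc

def Rejects (M : SDA k α) (x : List α) : Prop := ∃ t, (M.run x t).st ∈ M.qrej

def Halts (M : SDA k α) (x : List α) : Prop := ∃ t, M.Halted (M.run x t)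

def Recognizes (M : SDA k α) (L : Language α) : Prop :=
  ∀ x, (x ∈ L ↔ M.Accepts x) ∧ (x ∉ L ↔ M.Rejects x)

def lang (M : SDA k α) : Language α := {x | M.Accepts x}

/-- `M` halts within polynomial time on every input. -/
def PolyTime (M : SDA k α) : Prop :=
  ∃ c : ℕ, ∀ x : List α, ∃ t ≤ c * x.length ^ c + c, M.Halted (M.run x t)

/-- Structural well-formedness: graded storage alphabet, read-once
(one-way) input head, and the depth-`k` requirement on the storage tape
(passing through a symbol of depth `e < k` raises its depth by `1`, and
by `2` at a turn, capped at `k`; depth-`k` symbols are frozen). Because the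
depth alphabets are mutually disjoint, the direction from which the head
arrived is encoded in the parity of the depth. -/
def WellFormed (M : SDA k α) : Prop :=
  (∀ s, M.dv s ≤ k) ∧ M.dv M.box = 0 ∧ M.dv M.blank = k ∧ M.dv M.lend = k ∧
  M.blank ≠ M.lend ∧
  ∀ q σ γ,
    ((M.δ q σ γ).dIn ≠ Dir.left) ∧
    ((M.δ q σ γ).wr = M.lend ↔ γ = M.lend) ∧
    (γ = M.lend → (M.δ q σ γ).dSt ≠ Dir.left) ∧
    (M.dv γ = k → (M.δ q σ γ).wr = γ) ∧
    ((M.δ q σ γ).dSt = Dir.stay → (M.δ q σ γ).wr = γ) ∧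
    (M.dv γ < k → (M.δ q σ γ).dSt = Dir.right →
      M.dv (M.δ q σ γ).wr = min (M.dv γ + if Even (M.dv γ) then 1 else 2) k) ∧
    (M.dv γ < k → (M.δ q σ γ).dSt = Dir.left →
      M.dv (M.δ q σ γ).wr = min (M.dv γ + if Even (M.dv γ) then 2 else 1) k) ∧
    (M.dv (M.δ q σ γ).wr = k → (M.δ q σ γ).wr = M.lend ∨ (M.δ q σ γ).wr = M.blank)

/-- Depth-susceptibility: while scanning a storage symbol of depth
`≥ k-1` the input head is stationary, and while scanning the frozen
blank the inner state does not change. -/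
def DepthSusceptible (M : SDA k α) : Prop :=
  ∀ q σ γ,
    (k - 1 ≤ M.dv γ → (M.δ q σ γ).dIn = Dir.stay) ∧
    (γ = M.blank → (M.δ q σ γ).st = q)

end SDA

/-- The family `kSDA` of languages recognized by depth-susceptible k-sda's. -/
def kSDA (k : ℕ) (α : Type) : Set (Language α) :=
  {L | ∃ M : SDA k α, M.WellFormed ∧ M.DepthSusceptible ∧ M.Recognizes L}

/-- The family `kSDA_imm` of languages recognized by polynomial-time
depth-immune k-sda's (no behavioral restriction at high-depth symbols). -/
def kSDAimm (k : ℕ) (α : Type) : Set (Language α) :=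
  {L | ∃ M : SDA k α, M.WellFormed ∧ M.PolyTime ∧ M.Recognizes L}

/-! ### One-way deterministic pushdown automata and DCFL -/

/-- A deterministic pushdown automaton (acceptance by final state with the
whole input consumed). `δε` gives ε-moves, `δ` gives reading moves; on a
transition the top stack symbol is replaced by a string. -/
structure DPDA (α : Type) where
  Q : ℕ
  G : ℕ
  q0 : Fin Q
  Z0 : Fin G
  qacc : Finset (Fin Q)
  δε : Fin Q → Fin G → Option (Fin Q × List (Fin G))
  δ : Fin Q → α → Fin G → Option (Fin Q × List (Fin G))

namespace DPDA

variable {α : Type}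

structure Cfg (P : DPDA α) where
  st : Fin P.Q
  input : List α
  stack : List (Fin P.G)

def init (P : DPDA α) (x : List α) : P.Cfg := ⟨P.q0, x, [P.Z0]⟩

def step (P : DPDA α) (c : P.Cfg) : P.Cfg :=
  match c.stack with
  | [] => c
  | Z :: ζ =>
    match P.δε c.st Z with
    | some (p, γ) => ⟨p, c.input, γ ++ ζ⟩
    | none =>
      match c.input with
      | [] => c
      | a :: w =>
        match P.δ c.st a Z with
        | some (p, γ) => ⟨p, w, γ ++ ζ⟩
        | none => c

/-- Determinism: an ε-move and a reading move are never both available. -/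
def Deterministic (P : DPDA α) : Prop :=
  ∀ q Z, (P.δε q Z).isSome → ∀ a, P.δ q a Z = none

def Accepts (P : DPDA α) (x : List α) : Prop :=
  ∃ t, (P.step^[t] (P.init x)).input = [] ∧ (P.step^[t] (P.init x)).st ∈ P.qacc

end DPDA

/-- The deterministic context-free languages. -/
def DCFL (α : Type) : Set (Language α) :=
  {L | ∃ P : DPDA α, P.Deterministic ∧ ∀ x, x ∈ L ↔ P.Accepts x}

/-! ### Offline deterministic Turing machines; SC^k and P -/

structure TMOut (Q W : ℕ) where
  st : Fin Q
  wr : Fin W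
  dIn : Dir
  dW : Dir

/-- A deterministic Turing machine with a two-way read-only input tape and
one semi-infinite rewritable work tape. -/
structure OffTM (α : Type) where
  Q : ℕ
  W : ℕ
  q0 : Fin Q
  blank : Fin W
  qacc : Finset (Fin Q)
  qrej : Finset (Fin Q)
  δ : Fin Q → InSym α → Fin W → TMOut Q W

namespace OffTM

variable {α : Type}

structure Cfg (M : OffTM α) where
  st : Fin M.Q
  ip : ℕ
  wp : ℕ
  w : ℕ → Fin M.W

def init (M : OffTM α) : M.Cfg := ⟨M.q0, 0, 0, fun _ => M.blank⟩

def Halted (M : OffTM α) (c : M.Cfg) : Prop := c.st ∈ M.qacc ∨ c.st ∈ M.qrej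

def step (M : OffTM α) (x : List α) (c : M.Cfg) : M.Cfg :=
  if c.st ∈ M.qacc ∨ c.st ∈ M.qrej then c
  else
    let t := M.δ c.st (inAt x c.ip) (c.w c.wp)
    ⟨t.st, moveIn x.length c.ip t.dIn, moveNat c.wp t.dW,
      Function.update c.w c.wp t.wr⟩

def run (M : OffTM α) (x : List α) (t : ℕ) : M.Cfg := (M.step x)^[t] M.init

def Accepts (M : OffTM α) (x : List α) : Prop := ∃ t, (M.run x t).st ∈ M.qacc

end OffTM

/-- Steve's class `SC^k`: languages decided by deterministic Turing machines
simultaneously in polynomial time and `O(log^k n)` space. -/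
def SCk (k : ℕ) (α : Type) : Set (Language α) :=
  {L | ∃ M : OffTM α, ∃ c : ℕ,
    (∀ x : List α, ∃ t ≤ c * x.length ^ c + c, M.Halted (M.run x t)) ∧
    (∀ x, x ∈ L ↔ M.Accepts x) ∧
    (∀ (x : List α) (t : ℕ), (M.run x t).wp + 1 ≤ c * (Nat.log 2 x.length) ^ k + c)}

/-- `SC = ⋃_{k ≥ 1} SC^k`. -/
def SC (α : Type) : Set (Language α) := {L | ∃ k, 1 ≤ k ∧ L ∈ SCk k α}

/-- Polynomial time. -/
def Pclass (α : Type) : Set (Language α) :=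
  {L | ∃ M : OffTM α, ∃ c : ℕ,
    (∀ x : List α, ∃ t ≤ c * x.length ^ c + c, M.Halted (M.run x t)) ∧
    (∀ x, x ∈ L ↔ M.Accepts x)}

/-! ### Function transducers; FL and logspace many-one reductions -/

structure TTMOut (Q W : ℕ) (β : Type) where
  st : Fin Q
  wr : Fin W
  dIn : Dir
  dW : Dir
  out : Option β

/-- A deterministic Turing machine computing a function: a two-way read-only
input tape, one work tape, and a write-once output tape. -/
structure TransTM (α β : Type) where
  Q : ℕ
  W : ℕ
  q0 : Fin Q
  blank : Fin W
  qhalt : Finset (Fin Q)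
  δ : Fin Q → InSym α → Fin W → TTMOut Q W β

namespace TransTM

variable {α β : Type}

structure Cfg (M : TransTM α β) where
  st : Fin M.Q
  ip : ℕ
  wp : ℕ
  w : ℕ → Fin M.W
  out : List β

def init (M : TransTM α β) : M.Cfg := ⟨M.q0, 0, 0, fun _ => M.blank, []⟩

def step (M : TransTM α β) (x : List α) (c : M.Cfg) : M.Cfg :=
  if c.st ∈ M.qhalt then c
  else
    let t := M.δ c.st (inAt x c.ip) (c.w c.wp)
    ⟨t.st, moveIn x.length c.ip t.dIn, moveNat c.wp t.dW,
      Function.update c.w c.wp t.wr, c.out ++ t.out.toList⟩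

def run (M : TransTM α β) (x : List α) (t : ℕ) : M.Cfg := (M.step x)^[t] M.init

def Computes (M : TransTM α β) (f : List α → List β) : Prop :=
  ∀ x, ∃ t, (M.run x t).st ∈ M.qhalt ∧ (M.run x t).out = f x

def PolyTime (M : TransTM α β) : Prop :=
  ∃ c : ℕ, ∀ x : List α, ∃ t ≤ c * x.length ^ c + c, (M.run x t).st ∈ M.qhalt

def LogSpace (M : TransTM α β) : Prop :=
  ∃ c : ℕ, ∀ (x : List α) (t : ℕ), (M.run x t).wp + 1 ≤ c * Nat.log 2 x.length + c

end TransTM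

/-- `FL`: functions computable in polynomial time and `O(log n)` space. -/
def InFL {α β : Type} (f : List α → List β) : Prop :=
  ∃ M : TransTM α β, M.Computes f ∧ M.PolyTime ∧ M.LogSpace

/-- Logarithmic-space many-one reducibility `≤^L_m`. -/
def LmRed {α β : Type} (L₁ : Language α) (L₂ : Language β) : Prop :=
  ∃ f : List α → List β, InFL f ∧ ∀ x, x ∈ L₁ ↔ f x ∈ L₂

/-- `LOGkSDA`: the closure of `kSDA` under `≤^L_m` (targets over a finite
alphabet, w.l.o.g. `Fin m`). -/
def LOGkSDA (k : ℕ) (α : Type) : Set (Language α) :=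
  {A | ∃ m : ℕ, ∃ B ∈ kSDA k (Fin m), LmRed A B}

/-- `LOGkSDA_imm`: the closure of `kSDA_imm` under `≤^L_m`. -/
def LOGkSDAimm (k : ℕ) (α : Type) : Set (Language α) :=
  {A | ∃ m : ℕ, ∃ B ∈ kSDAimm k (Fin m), LmRed A B}

/-- `LOGDCFL`: the closure of `DCFL` under `≤^L_m`. -/
def LOGDCFL (α : Type) : Set (Language α) :=
  {A | ∃ m : ℕ, ∃ B ∈ DCFL (Fin m), LmRed A B}

/-! ### Deterministic auxiliary depth-`k` storage automata -/

structure AuxOut (Q W G : ℕ) where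
  st : Fin Q
  wrW : Fin W
  wrG : Fin G
  dIn : Dir
  dW : Dir
  dSt : Dir

/-- A deterministic auxiliary depth-`k` storage automaton: a two-way
read-only input tape, a rewritable auxiliary work tape, and a depth-`k`
storage tape. -/
structure AuxSDA (k : ℕ) (α : Type) where
  Q : ℕ
  W : ℕ
  G : ℕ
  dv : Fin G → ℕ
  box : Fin G
  blank : Fin G
  lend : Fin G
  wblank : Fin W
  q0 : Fin Q
  qacc : Finset (Fin Q)
  qrej : Finset (Fin Q)
  δ : Fin Q → InSym α → Fin W → Fin G → AuxOut Q W G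

namespace AuxSDA

variable {k : ℕ} {α : Type}

structure Cfg (M : AuxSDA k α) where
  st : Fin M.Q
  ip : ℕ
  wp : ℕ
  sp : ℕ
  w : ℕ → Fin M.W
  tape : ℕ → Fin M.G

def init (M : AuxSDA k α) : M.Cfg :=
  ⟨M.q0, 0, 0, 0, fun _ => M.wblank, fun i => if i = 0 then M.lend else M.box⟩

def Halted (M : AuxSDA k α) (c : M.Cfg) : Prop := c.st ∈ M.qacc ∨ c.st ∈ M.qrej

def step (M : AuxSDA k α) (x : List α) (c : M.Cfg) : M.Cfg :=
  if c.st ∈ M.qacc ∨ c.st ∈ M.qrej then c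
  else
    let t := M.δ c.st (inAt x c.ip) (c.w c.wp) (c.tape c.sp)
    ⟨t.st, moveIn x.length c.ip t.dIn, moveNat c.wp t.dW, moveNat c.sp t.dSt,
      Function.update c.w c.wp t.wrW, Function.update c.tape c.sp t.wrG⟩

def run (M : AuxSDA k α) (x : List α) (t : ℕ) : M.Cfg := (M.step x)^[t] M.init

def Accepts (M : AuxSDA k α) (x : List α) : Prop := ∃ t, (M.run x t).st ∈ M.qacc

def Rejects (M : AuxSDA k α) (x : List α) : Prop := ∃ t, (M.run x t).st ∈ M.qrej

def Recognizes (M : AuxSDA k α) (L : Language α) : Prop :=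
  ∀ x, (x ∈ L ↔ M.Accepts x) ∧ (x ∉ L ↔ M.Rejects x)

def PolyTime (M : AuxSDA k α) : Prop :=
  ∃ c : ℕ, ∀ x : List α, ∃ t ≤ c * x.length ^ c + c, M.Halted (M.run x t)

/-- The auxiliary work tape uses only `O(log n)` cells. -/
def LogSpace (M : AuxSDA k α) : Prop :=
  ∃ c : ℕ, ∀ (x : List α) (t : ℕ), (M.run x t).wp + 1 ≤ c * Nat.log 2 x.length + c

/-- Structural well-formedness: the depth-`k` requirement on the storage
tape and the stationary requirement. -/
def WellFormed (M : AuxSDA k α) : Prop :=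
  (∀ s, M.dv s ≤ k) ∧ M.dv M.box = 0 ∧ M.dv M.blank = k ∧ M.dv M.lend = k ∧
  M.blank ≠ M.lend ∧
  ∀ q σ τ γ,
    ((M.δ q σ τ γ).wrG = M.lend ↔ γ = M.lend) ∧
    (γ = M.lend → (M.δ q σ τ γ).dSt ≠ Dir.left) ∧
    (M.dv γ = k → (M.δ q σ τ γ).wrG = γ) ∧
    ((M.δ q σ τ γ).dSt = Dir.stay → (M.δ q σ τ γ).wrG = γ) ∧
    ((M.δ q σ τ γ).dW = Dir.stay → (M.δ q σ τ γ).wrW = τ) ∧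
    (M.dv γ < k → (M.δ q σ τ γ).dSt = Dir.right →
      M.dv (M.δ q σ τ γ).wrG = min (M.dv γ + if Even (M.dv γ) then 1 else 2) k) ∧
    (M.dv γ < k → (M.δ q σ τ γ).dSt = Dir.left →
      M.dv (M.δ q σ τ γ).wrG = min (M.dv γ + if Even (M.dv γ) then 2 else 1) k) ∧
    (M.dv (M.δ q σ τ γ).wrG = k →
      (M.δ q σ τ γ).wrG = M.lend ∨ (M.δ q σ τ γ).wrG = M.blank)

/-- Depth-susceptibility for auxiliary machines: while scanning a storage
symbol of depth `≥ k-1`, both the input head and the auxiliary head are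
stationary; while scanning the frozen blank, the inner state is unchanged. -/
def DepthSusceptible (M : AuxSDA k α) : Prop :=
  ∀ q σ τ γ,
    (k - 1 ≤ M.dv γ → (M.δ q σ τ γ).dIn = Dir.stay ∧ (M.δ q σ τ γ).dW = Dir.stay) ∧
    (γ = M.blank → (M.δ q σ τ γ).st = q)

end AuxSDA

/-! ### Two-way multi-head deterministic depth-`k` storage automata -/

structure MOut (Q G ℓ : ℕ) where
  st : Fin Q
  wr : Fin G
  dIn : Fin ℓ → Dir
  dSt : Dir

/-- A two-way `ℓ`-head deterministic depth-`k` storage automaton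
(`k`-sda₂(ℓ)): `ℓ` two-way read-only input heads and one depth-`k`
storage tape. -/
structure MSDA (k ℓ : ℕ) (α : Type) where
  Q : ℕ
  G : ℕ
  dv : Fin G → ℕ
  box : Fin G
  blank : Fin G
  lend : Fin G
  q0 : Fin Q
  qacc : Finset (Fin Q)
  qrej : Finset (Fin Q)
  δ : Fin Q → (Fin ℓ → InSym α) → Fin G → MOut Q G ℓ

namespace MSDA

variable {k ℓ : ℕ} {α : Type}

structure Cfg (M : MSDA k ℓ α) where
  st : Fin M.Q
  ips : Fin ℓ → ℕ
  sp : ℕ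
  tape : ℕ → Fin M.G

def init (M : MSDA k ℓ α) : M.Cfg :=
  ⟨M.q0, fun _ => 0, 0, fun i => if i = 0 then M.lend else M.box⟩

def Halted (M : MSDA k ℓ α) (c : M.Cfg) : Prop := c.st ∈ M.qacc ∨ c.st ∈ M.qrej

def step (M : MSDA k ℓ α) (x : List α) (c : M.Cfg) : M.Cfg :=
  if c.st ∈ M.qacc ∨ c.st ∈ M.qrej then c
  else
    let t := M.δ c.st (fun i => inAt x (c.ips i)) (c.tape c.sp)
    ⟨t.st, fun i => moveIn x.length (c.ips i) (t.dIn i), moveNat c.sp t.dSt,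
      Function.update c.tape c.sp t.wr⟩

def run (M : MSDA k ℓ α) (x : List α) (t : ℕ) : M.Cfg := (M.step x)^[t] M.init

def Accepts (M : MSDA k ℓ α) (x : List α) : Prop := ∃ t, (M.run x t).st ∈ M.qacc

def Rejects (M : MSDA k ℓ α) (x : List α) : Prop := ∃ t, (M.run x t).st ∈ M.qrej

def Halts (M : MSDA k ℓ α) (x : List α) : Prop := ∃ t, M.Halted (M.run x t)

def Recognizes (M : MSDA k ℓ α) (L : Language α) : Prop :=
  ∀ x, (x ∈ L ↔ M.Accepts x) ∧ (x ∉ L ↔ M.Rejects x)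

def PolyTime (M : MSDA k ℓ α) : Prop :=
  ∃ c : ℕ, ∀ x : List α, ∃ t ≤ c * x.length ^ c + c, M.Halted (M.run x t)

def WellFormed (M : MSDA k ℓ α) : Prop :=
  (∀ s, M.dv s ≤ k) ∧ M.dv M.box = 0 ∧ M.dv M.blank = k ∧ M.dv M.lend = k ∧
  M.blank ≠ M.lend ∧
  ∀ q σ γ,
    ((M.δ q σ γ).wr = M.lend ↔ γ = M.lend) ∧
    (γ = M.lend → (M.δ q σ γ).dSt ≠ Dir.left) ∧
    (M.dv γ = k → (M.δ q σ γ).wr = γ) ∧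
    ((M.δ q σ γ).dSt = Dir.stay → (M.δ q σ γ).wr = γ) ∧
    (M.dv γ < k → (M.δ q σ γ).dSt = Dir.right →
      M.dv (M.δ q σ γ).wr = min (M.dv γ + if Even (M.dv γ) then 1 else 2) k) ∧
    (M.dv γ < k → (M.δ q σ γ).dSt = Dir.left →
      M.dv (M.δ q σ γ).wr = min (M.dv γ + if Even (M.dv γ) then 2 else 1) k) ∧
    (M.dv (M.δ q σ γ).wr = k → (M.δ q σ γ).wr = M.lend ∨ (M.δ q σ γ).wr = M.blank)

/-- Depth-susceptibility: all input heads are stationary while the storage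
head scans a symbol of depth `≥ k-1`, and the state is unchanged while
scanning the frozen blank. -/
def DepthSusceptible (M : MSDA k ℓ α) : Prop :=
  ∀ q σ γ,
    (k - 1 ≤ M.dv γ → ∀ i, (M.δ q σ γ).dIn i = Dir.stay) ∧
    (γ = M.blank → (M.δ q σ γ).st = q)

/-- Head `h` is a counter head: the transition function ignores the symbol
it scans, and the storage-tape head stays still whenever head `h` moves. -/
def CounterHead (M : MSDA k ℓ α) (h : Fin ℓ) : Prop :=
  (∀ q σ σ' γ, (∀ i, i ≠ h → σ i = σ' i) → M.δ q σ γ = M.δ q σ' γ) ∧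
  (∀ q σ γ, (M.δ q σ γ).dIn h ≠ Dir.stay → (M.δ q σ γ).dSt = Dir.stay)

/-- Head `h` never moves to the left. -/
def OneWayHead (M : MSDA k ℓ α) (h : Fin ℓ) : Prop :=
  ∀ q σ γ, (M.δ q σ γ).dIn h ≠ Dir.left

end MSDA

/-- `kSDA₂(ℓ)`: languages recognized in polynomial time by depth-immune
two-way `ℓ`-head deterministic depth-`k` storage automata. -/
def kSDA2 (k ℓ : ℕ) (α : Type) : Set (Language α) :=
  {L | ∃ M : MSDA k ℓ α, M.WellFormed ∧ M.PolyTime ∧ M.Recognizes L}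

/-! ### Hibbard's deterministic k-limited automata -/

structure LDAOut (Q G : ℕ) where
  st : Fin Q
  wr : Fin G
  d : Dir

/-- A deterministic `k`-limited automaton: a single-tape two-way machine
whose tape initially holds `▷ x ◁`; each cell may be rewritten only during
its first `k` visits (a turn counts twice), tracked by the graded tape
alphabet. -/
structure LDA (k : ℕ) (α : Type) where
  Q : ℕ
  G : ℕ
  dv : Fin G → ℕ
  embed : α → Fin G     -- input symbols, of depth 0
  lend : Fin G          -- `▷`, frozen
  rend : Fin G          -- `◁`, frozen
  q0 : Fin Q
  qacc : Finset (Fin Q)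
  qrej : Finset (Fin Q)
  δ : Fin Q → Fin G → LDAOut Q G

namespace LDA

variable {k : ℕ} {α : Type}

structure Cfg (M : LDA k α) where
  st : Fin M.Q
  p : ℕ
  tape : ℕ → Fin M.G

def init (M : LDA k α) (x : List α) : M.Cfg :=
  ⟨M.q0, 0, fun i =>
    if i = 0 then M.lend
    else if h : i - 1 < x.length then M.embed (x.get ⟨i - 1, h⟩)
    else M.rend⟩

def Halted (M : LDA k α) (c : M.Cfg) : Prop := c.st ∈ M.qacc ∨ c.st ∈ M.qrej

def step (M : LDA k α) (c : M.Cfg) : M.Cfg :=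
  if c.st ∈ M.qacc ∨ c.st ∈ M.qrej then c
  else
    let t := M.δ c.st (c.tape c.p)
    ⟨t.st, moveNat c.p t.d, Function.update c.tape c.p t.wr⟩

def run (M : LDA k α) (x : List α) (t : ℕ) : M.Cfg := M.step^[t] (M.init x)

def Accepts (M : LDA k α) (x : List α) : Prop := ∃ t, (M.run x t).st ∈ M.qacc

def Rejects (M : LDA k α) (x : List α) : Prop := ∃ t, (M.run x t).st ∈ M.qrej

def Recognizes (M : LDA k α) (L : Language α) : Prop :=
  ∀ x, (x ∈ L ↔ M.Accepts x) ∧ (x ∉ L ↔ M.Rejects x)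

def WellFormed (M : LDA k α) : Prop :=
  (∀ s, M.dv s ≤ k) ∧ (∀ a, M.dv (M.embed a) = 0) ∧
  M.dv M.lend = k ∧ M.dv M.rend = k ∧ M.lend ≠ M.rend ∧
  ∀ q γ,
    ((M.δ q γ).wr = M.lend ↔ γ = M.lend) ∧
    ((M.δ q γ).wr = M.rend ↔ γ = M.rend) ∧
    (γ = M.lend → (M.δ q γ).d ≠ Dir.left) ∧
    (γ = M.rend → (M.δ q γ).d ≠ Dir.right) ∧
    (M.dv γ = k → (M.δ q γ).wr = γ) ∧
    ((M.δ q γ).d = Dir.stay → (M.δ q γ).wr = γ) ∧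
    (M.dv γ < k → (M.δ q γ).d = Dir.right →
      M.dv (M.δ q γ).wr = min (M.dv γ + if Even (M.dv γ) then 1 else 2) k) ∧
    (M.dv γ < k → (M.δ q γ).d = Dir.left →
      M.dv (M.δ q γ).wr = min (M.dv γ + if Even (M.dv γ) then 2 else 1) k)

end LDA

/-! ### Encodings of k-sda's and the membership problem MEMB_k -/

/-- An encoding scheme: a map sending every depth-susceptible k-sda over an
alphabet `Fin a` together with an input to a binary string. -/
def EncInjective {k : ℕ}
    (enc : (a : ℕ) → SDA k (Fin a) → List (Fin a) → List Bool) : Prop :=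
  Function.Injective
    (fun p : (a : ℕ) × (SDA k (Fin a) × List (Fin a)) => enc p.1 p.2.1 p.2.2)

/-- The membership problem `MEMB_k` relative to an encoding scheme. -/
def MEMB (k : ℕ)
    (enc : (a : ℕ) → SDA k (Fin a) → List (Fin a) → List Bool) : Language Bool :=
  {y | ∃ (a : ℕ) (M : SDA k (Fin a)) (x : List (Fin a)),
    M.WellFormed ∧ M.DepthSusceptible ∧ y = enc a M x ∧ M.Accepts x}


/-! ### Auxiliary material for the hardness theorem -/

instance : Finite Dir := by
  have : Function.Injective (fun d : Dir => match d with
    | .left => (0 : Fin 3) | .stay => 1 | .right => 2) := by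
    intro a b h; cases a <;> cases b <;> simp_all
  exact Finite.of_injective _ this

instance {α : Type} [Finite α] : Finite (InSym α) := by
  have : Function.Injective (fun s : InSym α => match s with
    | .lend => (Sum.inl () : Unit ⊕ Unit ⊕ α) | .rend => Sum.inr (Sum.inl ())
    | .sym a => Sum.inr (Sum.inr a)) := by
    intro a b h; cases a <;> cases b <;> simp_all
  exact Finite.of_injective _ this

instance {Q G : ℕ} : Countable (SDAOut Q G) := by
  have : Function.Injective (fun s : SDAOut Q G => (s.st, s.wr, s.dIn, s.dSt)) := by
    intro a b h; cases a; cases b; simp_all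
  exact this.countable

set_option synthInstance.maxHeartbeats 1000000 in
instance {k : ℕ} {α : Type} [Finite α] : Countable (SDA k α) := by
  have : Function.Injective (fun M : SDA k α =>
      (⟨M.Q, M.G, (M.dv, M.box, M.blank, M.lend, M.q0, M.qacc, M.qrej, M.δ)⟩ :
        Σ Q G : ℕ, (Fin G → ℕ) × Fin G × Fin G × Fin G × Fin Q × Finset (Fin Q) ×
          Finset (Fin Q) × (Fin Q → InSym α → Fin G → SDAOut Q G))) := by
    intro a b h; cases a; cases b
    injection h with h1 h
    subst h1
    injection h with h2 h
    subst h2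
    simp_all
  exact this.countable

noncomputable def machIdx (k : ℕ) : (Σ a : ℕ, SDA k (Fin a)) → ℕ :=
  (exists_injective_nat (Σ a : ℕ, SDA k (Fin a))).choose

lemma machIdx_inj (k : ℕ) : Function.Injective (machIdx k) :=
  (exists_injective_nat (Σ a : ℕ, SDA k (Fin a))).choose_spec

/-- Unary block-code for input symbols. -/
def symCode {m : ℕ} (v : Fin m) : List Bool := List.replicate (v.val + 1) true ++ [false]

/-- The fixed encoding scheme. -/
noncomputable def encFix (k : ℕ) : (a : ℕ) → SDA k (Fin a) → List (Fin a) → List Bool :=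
  fun a M x =>
    List.replicate (machIdx k ⟨a, M⟩) true ++ false :: false :: x.flatMap symCode

lemma rep_true_inj : ∀ (n1 : ℕ) {n2 : ℕ} {X Y : List Bool},
    List.replicate n1 true ++ false :: X = List.replicate n2 true ++ false :: Y →
    n1 = n2 ∧ X = Y := by
  intro n1
  induction n1 with
  | zero =>
    intro n2 X Y h
    cases n2 with
    | zero => simpa using h
    | succ n => simp [List.replicate_succ] at h
  | succ n ih =>
    intro n2 X Y h
    cases n2 with
    | zero => simp [List.replicate_succ] at h
    | succ n' =>
      simp only [List.replicate_succ, List.cons_append, List.cons.injEq, true_and] at h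
      obtain ⟨h1, h2⟩ := ih h
      exact ⟨by omega, h2⟩

lemma flatMap_symCode_inj {m : ℕ} :
    Function.Injective (fun x : List (Fin m) => x.flatMap symCode) := by
  intro x
  induction x with
  | nil =>
    intro y h
    cases y with
    | nil => rfl
    | cons w ys =>
      exfalso
      simp only [List.flatMap_nil, List.flatMap_cons, symCode, List.replicate_succ] at h
      exact absurd h (by simp)
  | cons v xs ih =>
    intro y h
    cases y with
    | nil =>
      exfalso
      simp only [List.flatMap_nil, List.flatMap_cons, symCode, List.replicate_succ] at h
      exact absurd h (by simp)
    | cons w ys =>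
      simp only [List.flatMap_cons, symCode] at h
      rw [List.append_assoc, List.append_assoc, List.singleton_append,
        List.singleton_append] at h
      obtain ⟨h1, h2⟩ := rep_true_inj _ h
      have hv : v = w := Fin.ext (by omega)
      subst hv
      rw [ih h2]

lemma encFix_injective (k : ℕ) : Function.Injective
    (fun p : (a : ℕ) × (SDA k (Fin a) × List (Fin a)) => encFix k p.1 p.2.1 p.2.2) := by
  rintro ⟨a, M, x⟩ ⟨a', M', x'⟩ h
  simp only [encFix] at h
  obtain ⟨h1, h2⟩ := rep_true_inj _ h
  have hMM : (⟨a, M⟩ : Σ a : ℕ, SDA k (Fin a)) = ⟨a', M'⟩ := machIdx_inj k h1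
  injection hMM with ha hM
  subst ha
  rw [heq_eq_eq] at hM
  subst hM
  injection h2 with _ h3
  rw [flatMap_symCode_inj h3]

lemma mem_MEMB_iff {k a : ℕ} {M : SDA k (Fin a)} (hwf : M.WellFormed)
    (hds : M.DepthSusceptible) (y : List (Fin a)) :
    encFix k a M y ∈ MEMB k (encFix k) ↔ M.Accepts y := by
  constructor
  · rintro ⟨a', M', x', _, _, heq, hacc⟩
    have h : (⟨a, M, y⟩ : (a : ℕ) × (SDA k (Fin a) × List (Fin a))) = ⟨a', M', x'⟩ :=
      encFix_injective k heq
    injection h with ha h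
    subst ha
    rw [heq_eq_eq] at h
    injection h with hM hx
    subst hM; subst hx
    exact hacc
  · intro h
    exact ⟨a, M, y, hwf, hds, rfl, h⟩

/-! ### The identity transducer -/

lemma TransTM.step_halted {α β : Type} (M : TransTM α β) (x : List α) {c : M.Cfg}
    (h : c.st ∈ M.qhalt) : M.step x c = c := by
  simp [TransTM.step, h]

lemma TransTM.run_succ {α β : Type} (M : TransTM α β) (x : List α) (t : ℕ) :
    M.run x (t + 1) = M.step x (M.run x t) := by
  simp [TransTM.run, Function.iterate_succ_apply']

def idTM (a : ℕ) : TransTM (Fin a) (Fin a) where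
  Q := 2
  W := 1
  q0 := 0
  blank := 0
  qhalt := {1}
  δ := fun _ σ τ =>
    match σ with
    | .lend => ⟨0, τ, .right, .stay, none⟩
    | .sym b => ⟨0, τ, .right, .stay, some b⟩
    | .rend => ⟨1, τ, .stay, .stay, none⟩

abbrev idSt0 (a : ℕ) : Fin (idTM a).Q := ⟨0, by exact Nat.zero_lt_two⟩
abbrev idSt1 (a : ℕ) : Fin (idTM a).Q := ⟨1, by exact Nat.one_lt_two⟩
abbrev idWb (a : ℕ) : Fin (idTM a).W := ⟨0, by exact Nat.zero_lt_one⟩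

lemma idTM_step_wp (a : ℕ) (x : List (Fin a)) (c : (idTM a).Cfg) :
    ((idTM a).step x c).wp = c.wp := by
  rw [TransTM.step]
  split
  · rfl
  · cases h : inAt x c.ip <;> simp [idTM, h, moveNat]

lemma idTM_wp (a : ℕ) (x : List (Fin a)) (t : ℕ) : ((idTM a).run x t).wp = 0 := by
  induction t with
  | zero => rfl
  | succ t ih => rw [TransTM.run_succ, idTM_step_wp]; exact ih

lemma idTM_step_lend (a : ℕ) (x : List (Fin a)) (ip : ℕ) (w : ℕ → Fin (idTM a).W)
    (o : List (Fin a)) (h : inAt x ip = InSym.lend) :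
    (idTM a).step x ⟨idSt0 a, ip, 0, w, o⟩ =
      ⟨idSt0 a, min (ip + 1) (x.length + 1), 0, w, o⟩ := by
  rw [TransTM.step, if_neg (by simp [idTM, idSt0, Fin.ext_iff]; exact (by decide : (0 : Fin 2) ∉ ({1} : Finset (Fin 2))))]
  simp [idTM, h, moveIn, moveNat, Function.update_eq_self]
  congr 1
  exact Function.update_eq_self _ _

lemma idTM_step_sym (a : ℕ) (x : List (Fin a)) (ip : ℕ) (w : ℕ → Fin (idTM a).W)
    (o : List (Fin a)) (b : Fin a) (h : inAt x ip = InSym.sym b) :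
    (idTM a).step x ⟨idSt0 a, ip, 0, w, o⟩ =
      ⟨idSt0 a, min (ip + 1) (x.length + 1), 0, w, o ++ [b]⟩ := by
  rw [TransTM.step, if_neg (by simp [idTM, idSt0, Fin.ext_iff]; exact (by decide : (0 : Fin 2) ∉ ({1} : Finset (Fin 2))))]
  simp [idTM, h, moveIn, moveNat, Function.update_eq_self]
  congr 1
  exact Function.update_eq_self _ _

lemma idTM_step_rend (a : ℕ) (x : List (Fin a)) (ip : ℕ) (w : ℕ → Fin (idTM a).W)
    (o : List (Fin a)) (h : inAt x ip = InSym.rend) :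
    (idTM a).step x ⟨idSt0 a, ip, 0, w, o⟩ =
      ⟨idSt1 a, min ip (x.length + 1), 0, w, o⟩ := by
  rw [TransTM.step, if_neg (by simp [idTM, idSt0, Fin.ext_iff]; exact (by decide : (0 : Fin 2) ∉ ({1} : Finset (Fin 2))))]
  simp [idTM, h, moveIn, moveNat, Function.update_eq_self]
  congr 1
  exact Function.update_eq_self _ _

lemma idTM_run (a : ℕ) (x : List (Fin a)) :
    ∀ t, t ≤ x.length + 1 →
      (idTM a).run x t = ⟨idSt0 a, t, 0, fun _ => idWb a, x.take (t - 1)⟩ := by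
  intro t
  induction t with
  | zero => intro _; rfl
  | succ t ih =>
    intro ht
    rw [TransTM.run_succ, ih (by omega)]
    rcases Nat.eq_zero_or_pos t with rfl | hpos
    · rw [idTM_step_lend a x 0 _ _ (by simp [inAt])]
      simp
    · have hlt : t - 1 < x.length := by omega
      have hsym : inAt x t = InSym.sym (x.get ⟨t - 1, hlt⟩) := by
        simp only [inAt]
        rw [if_neg (by omega), dif_pos hlt]
      rw [idTM_step_sym a x t _ _ (x.get ⟨t - 1, hlt⟩) hsym]
      congr 1
      · omega
      · rw [show t + 1 - 1 = (t - 1) + 1 by omega, List.take_succ,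
          List.getElem?_eq_getElem hlt]
        simp

/-! ### More runtime lemmas -/

lemma TransTM.run_add {α β : Type} (M : TransTM α β) (x : List α) (s j : ℕ) :
    M.run x (s + j) = (M.step x)^[j] (M.run x s) := by
  rw [TransTM.run, TransTM.run, Nat.add_comm, Function.iterate_add_apply]

lemma TransTM.ip_le {α β : Type} (M : TransTM α β) (x : List α) (t : ℕ) :
    (M.run x t).ip ≤ x.length + 1 := by
  induction t with
  | zero => exact Nat.zero_le _
  | succ t ih =>
    rw [TransTM.run_succ, TransTM.step]
    split
    · exact ih
    · exact min_le_right _ _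

lemma idTM_final (a : ℕ) (x : List (Fin a)) :
    ((idTM a).run x (x.length + 2)).st ∈ (idTM a).qhalt ∧
      ((idTM a).run x (x.length + 2)).out = x := by
  have h1 : (idTM a).run x (x.length + 1) =
      ⟨idSt0 a, x.length + 1, 0, fun _ => idWb a, x.take (x.length + 1 - 1)⟩ :=
    idTM_run a x (x.length + 1) le_rfl
  have hrend : inAt x (x.length + 1) = InSym.rend := by
    simp only [inAt]
    rw [if_neg (by omega), dif_neg (by omega)]
  have h2 : (idTM a).run x (x.length + 2) =
      ⟨idSt1 a, min (x.length + 1) (x.length + 1), 0, fun _ => idWb a,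
        x.take (x.length + 1 - 1)⟩ := by
    rw [show x.length + 2 = (x.length + 1) + 1 by omega, TransTM.run_succ, h1,
      idTM_step_rend a x _ _ _ hrend]
  rw [h2]
  constructor
  · simp [idTM, idSt1]; exact (by decide : (1 : Fin 2) ∈ ({1} : Finset (Fin 2)))
  · simp

lemma idTM_polyTime (a : ℕ) : (idTM a).PolyTime := by
  refine ⟨2, fun x => ⟨x.length + 2, ?_, ?_⟩⟩
  · have := Nat.le_self_pow (n := 2) (by norm_num) x.length
    omega
  · exact (idTM_final a x).1

lemma idTM_computes (a : ℕ) : (idTM a).Computes id := fun x =>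
  ⟨x.length + 2, (idTM_final a x).1, (idTM_final a x).2⟩

lemma idTM_logSpace (a : ℕ) : (idTM a).LogSpace :=
  ⟨1, fun x t => by simp [idTM_wp]⟩

/-! ### The block-coding composition machine -/

section Compose

variable {α : Type} {m : ℕ}

/-- Pending part of a block output. -/
def pend : ℕ → List Bool
  | 0 => []
  | r + 1 => List.replicate r true ++ [false]

variable (T : TransTM α (Fin m)) (p : List Bool)

def cQ : ℕ := (p.length + 1) + T.Q * (m + 2)

def cD : (Fin (p.length + 1) ⊕ Fin T.Q × Fin (m + 2)) ≃ Fin (cQ T p) :=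
  ((Equiv.refl (Fin (p.length + 1))).sumCongr finProdFinEquiv).trans finSumFinEquiv

def mkP (i : Fin (p.length + 1)) : Fin (cQ T p) := cD T p (Sum.inl i)

def mkS (q : Fin T.Q) (r : Fin (m + 2)) : Fin (cQ T p) := cD T p (Sum.inr (q, r))

def rOf : Option (Fin m) → Fin (m + 2)
  | none => 0
  | some v => ⟨v.val + 2, by have := v.isLt; omega⟩

def cδ : Fin (cQ T p) → InSym α → Fin T.W → TTMOut (cQ T p) T.W Bool := fun s σ τ =>
  match (cD T p).symm s with
  | Sum.inl i =>
    if h : (i : ℕ) < p.length then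
      ⟨mkP T p ⟨i + 1, by omega⟩, τ, .stay, .stay, some (p.get ⟨i, h⟩)⟩
    else
      ⟨mkS T p T.q0 0, τ, .stay, .stay, none⟩
  | Sum.inr (q, r) =>
    if _ : (r : ℕ) = 0 then
      let u := T.δ q σ τ
      ⟨mkS T p u.st (rOf u.out), u.wr, u.dIn, u.dW, none⟩
    else
      ⟨mkS T p q ⟨(r : ℕ) - 1, by have := r.isLt; omega⟩, τ, .stay, .stay,
        some (decide ((r : ℕ) ≠ 1))⟩

def cTM : TransTM α Bool where
  Q := cQ T p
  W := T.W
  q0 := mkP T p 0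
  blank := T.blank
  qhalt := T.qhalt.image (fun q => mkS T p q 0)
  δ := cδ T p

lemma mkS_inj {q q' : Fin T.Q} {r r' : Fin (m + 2)} :
    mkS T p q r = mkS T p q' r' ↔ q = q' ∧ r = r' := by
  unfold mkS
  rw [Equiv.apply_eq_iff_eq]
  simp [Prod.ext_iff]

lemma mem_cHalt {q : Fin T.Q} {r : Fin (m + 2)} :
    mkS T p q r ∈ (cTM T p).qhalt ↔ q ∈ T.qhalt ∧ r = 0 := by
  show _ ∈ Finset.image _ _ ↔ _
  rw [Finset.mem_image]
  constructor
  · rintro ⟨q', hq', h⟩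
    rw [mkS_inj] at h
    obtain ⟨rfl, rfl⟩ := h
    exact ⟨hq', rfl⟩
  · rintro ⟨hq, rfl⟩
    exact ⟨q, hq, rfl⟩

lemma mkP_not_mem (i : Fin (p.length + 1)) : mkP T p i ∉ (cTM T p).qhalt := by
  show _ ∉ Finset.image _ _
  rw [Finset.mem_image]
  rintro ⟨q', _, h⟩
  exact absurd ((cD T p).injective h) (by simp)

lemma cδ_at_mkS (q : Fin T.Q) (r : Fin (m + 2)) (σ : InSym α) (τ : Fin T.W) :
    cδ T p (mkS T p q r) σ τ =
      if _ : (r : ℕ) = 0 then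
        let u := T.δ q σ τ
        ⟨mkS T p u.st (rOf u.out), u.wr, u.dIn, u.dW, none⟩
      else
        ⟨mkS T p q ⟨(r : ℕ) - 1, by have := r.isLt; omega⟩, τ, .stay, .stay,
          some (decide ((r : ℕ) ≠ 1))⟩ := by
  unfold cδ mkS
  rw [Equiv.symm_apply_apply]

lemma cδ_at_mkP (i : Fin (p.length + 1)) (σ : InSym α) (τ : Fin T.W) :
    cδ T p (mkP T p i) σ τ =
      if h : (i : ℕ) < p.length then
        ⟨mkP T p ⟨i + 1, by omega⟩, τ, .stay, .stay, some (p.get ⟨i, h⟩)⟩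
      else
        ⟨mkS T p T.q0 0, τ, .stay, .stay, none⟩ := by
  unfold cδ mkP
  rw [Equiv.symm_apply_apply]

variable (x : List α)

lemma cTM_step_flush (q : Fin T.Q) (r : Fin (m + 2)) (hr : (r : ℕ) ≠ 0)
    (ip wp : ℕ) (hip : ip ≤ x.length + 1) (w : ℕ → Fin T.W) (o : List Bool) :
    (cTM T p).step x ⟨mkS T p q r, ip, wp, w, o⟩ =
      ⟨mkS T p q ⟨(r : ℕ) - 1, by have := r.isLt; omega⟩, ip, wp, w,
        o ++ [decide ((r : ℕ) ≠ 1)]⟩ := by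
  rw [TransTM.step, if_neg (by show mkS T p q r ∉ (cTM T p).qhalt; rw [mem_cHalt]; rintro ⟨-, rfl⟩; exact hr rfl)]
  simp only [cTM]
  rw [cδ_at_mkS, dif_neg hr]
  simp [moveIn, moveNat, Function.update_eq_self, Nat.min_eq_left hip]

lemma cTM_step_sim (q : Fin T.Q) (hq : q ∉ T.qhalt)
    (ip wp : ℕ) (w : ℕ → Fin T.W) (o : List Bool) :
    (cTM T p).step x ⟨mkS T p q 0, ip, wp, w, o⟩ =
      ⟨mkS T p (T.δ q (inAt x ip) (w wp)).st (rOf (T.δ q (inAt x ip) (w wp)).out),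
        moveIn x.length ip (T.δ q (inAt x ip) (w wp)).dIn,
        moveNat wp (T.δ q (inAt x ip) (w wp)).dW,
        Function.update w wp (T.δ q (inAt x ip) (w wp)).wr, o⟩ := by
  rw [TransTM.step, if_neg (by show mkS T p q 0 ∉ (cTM T p).qhalt; rw [mem_cHalt]; rintro ⟨h, -⟩; exact hq h)]
  simp only [cTM]
  rw [cδ_at_mkS, dif_pos (by simp)]
  simp

lemma cTM_step_halt (q : Fin T.Q) (hq : q ∈ T.qhalt)
    (ip wp : ℕ) (w : ℕ → Fin T.W) (o : List Bool) :
    (cTM T p).step x ⟨mkS T p q 0, ip, wp, w, o⟩ = ⟨mkS T p q 0, ip, wp, w, o⟩ :=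
  TransTM.step_halted _ _ (by show mkS T p q 0 ∈ (cTM T p).qhalt; rw [mem_cHalt]; exact ⟨hq, rfl⟩)

lemma cTM_step_emit (i : Fin (p.length + 1)) (h : (i : ℕ) < p.length)
    (w : ℕ → Fin T.W) (o : List Bool) :
    (cTM T p).step x ⟨mkP T p i, 0, 0, w, o⟩ =
      ⟨mkP T p ⟨i + 1, by omega⟩, 0, 0, w, o ++ [p.get ⟨i, h⟩]⟩ := by
  rw [TransTM.step, if_neg (show ¬ (TransTM.Cfg.mk (mkP T p i) 0 0 w o : (cTM T p).Cfg).st ∈ (cTM T p).qhalt from mkP_not_mem T p i)]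
  simp only [cTM]
  rw [cδ_at_mkP, dif_pos h]
  simp [moveIn, moveNat, Function.update_eq_self]

lemma cTM_step_start (i : Fin (p.length + 1)) (h : ¬ (i : ℕ) < p.length)
    (w : ℕ → Fin T.W) (o : List Bool) :
    (cTM T p).step x ⟨mkP T p i, 0, 0, w, o⟩ = ⟨mkS T p T.q0 0, 0, 0, w, o⟩ := by
  rw [TransTM.step, if_neg (show ¬ (TransTM.Cfg.mk (mkP T p i) 0 0 w o : (cTM T p).Cfg).st ∈ (cTM T p).qhalt from mkP_not_mem T p i)]
  simp only [cTM]
  rw [cδ_at_mkP, dif_neg h]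
  simp [moveIn, moveNat, Function.update_eq_self]

lemma cTM_flushRun : ∀ (j : ℕ) (hj : j < m + 2) (q : Fin T.Q) (ip wp : ℕ)
    (hip : ip ≤ x.length + 1) (w : ℕ → Fin T.W) (o : List Bool),
    ((cTM T p).step x)^[j] ⟨mkS T p q ⟨j, hj⟩, ip, wp, w, o⟩ =
      ⟨mkS T p q 0, ip, wp, w, o ++ pend j⟩ := by
  intro j
  induction j with
  | zero =>
    intro hj q ip wp hip w o
    simp only [Function.iterate_zero, id_eq, pend, List.append_nil]
    congr 1
  | succ j ih =>
    intro hj q ip wp hip w o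
    rw [Function.iterate_succ_apply, cTM_step_flush T p x q ⟨j + 1, hj⟩ (by simp) _ _ hip]
    simp only [Fin.val_mk, Nat.add_sub_cancel]
    rw [ih (by omega) q ip wp hip w (o ++ [decide ((j + 1 : ℕ) ≠ 1)])]
    congr 1
    rcases Nat.eq_zero_or_pos j with rfl | hj0
    · simp [pend]
    · have h1 : (decide ((j + 1 : ℕ) ≠ 1)) = true := by
        simp; omega
      rw [h1]
      show (o ++ [true]) ++ pend j = o ++ pend (j + 1)
      obtain ⟨j', rfl⟩ := Nat.exists_eq_succ_of_ne_zero (by omega : j ≠ 0)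
      simp [pend, List.append_assoc, List.replicate_succ]

lemma cTM_prefixRun : ∀ (i : ℕ) (h : i ≤ p.length), (cTM T p).run x i =
    ⟨mkP T p ⟨i, by omega⟩, 0, 0, fun _ => T.blank, p.take i⟩ := by
  intro i
  induction i with
  | zero =>
    intro _
    show TransTM.Cfg.mk _ _ _ _ _ = _
    rfl
  | succ i ih =>
    intro hi
    rw [TransTM.run_succ, ih (by omega),
      cTM_step_emit T p x ⟨i, by omega⟩ (by simpa using hi)]
    congr 1
    rw [List.take_succ, List.getElem?_eq_getElem (by omega)]
    simp

def liftC (c : T.Cfg) (r : Fin (m + 2)) (o : List Bool) : (cTM T p).Cfg :=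
  ⟨mkS T p c.st r, c.ip, c.wp, c.w, o⟩

lemma cTM_sync (t : ℕ) : ∃ t' ≤ (p.length + 1) + (m + 2) * t,
    (cTM T p).run x t' =
      liftC T p (T.run x t) 0 (p ++ ((T.run x t).out).flatMap symCode) := by
  induction t with
  | zero =>
    refine ⟨p.length + 1, by omega, ?_⟩
    rw [TransTM.run_succ, cTM_prefixRun T p x p.length le_rfl,
      cTM_step_start T p x ⟨p.length, by omega⟩ (by simp)]
    show _ = TransTM.Cfg.mk _ _ _ _ _
    simp [TransTM.run, TransTM.init, List.take_length]
  | succ t ih =>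
    obtain ⟨t', ht', heq⟩ := ih
    by_cases hh : (T.run x t).st ∈ T.qhalt
    · refine ⟨t', by nlinarith, ?_⟩
      rw [heq, TransTM.run_succ, TransTM.step_halted T x hh]
    · set c := T.run x t with hc
      set u := T.δ c.st (inAt x c.ip) (c.w c.wp) with hu
      have hstep : (cTM T p).run x (t' + 1) =
          ⟨mkS T p u.st (rOf u.out), moveIn x.length c.ip u.dIn,
            moveNat c.wp u.dW, Function.update c.w c.wp u.wr,
            p ++ c.out.flatMap symCode⟩ := by
        rw [TransTM.run_succ, heq]
        exact cTM_step_sim T p x c.st hh c.ip c.wp c.w _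
      have hT1 : T.run x (t + 1) =
          ⟨u.st, moveIn x.length c.ip u.dIn, moveNat c.wp u.dW,
            Function.update c.w c.wp u.wr, c.out ++ u.out.toList⟩ := by
        rw [TransTM.run_succ, TransTM.step, if_neg hh]
      cases huo : u.out with
      | none =>
        refine ⟨t' + 1, by nlinarith, ?_⟩
        rw [hstep, hT1, huo]
        show TransTM.Cfg.mk _ _ _ _ _ = _
        simp [liftC, rOf]
        rfl
      | some v =>
        refine ⟨t' + 1 + (v.val + 2), by have := v.isLt; nlinarith, ?_⟩
        rw [TransTM.run_add, hstep, huo]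
        have hiter := cTM_flushRun T p x (v.val + 2) (by have := v.isLt; omega)
          u.st (moveIn x.length c.ip u.dIn) (moveNat c.wp u.dW)
          (min_le_right _ _) (Function.update c.w c.wp u.wr)
          (p ++ c.out.flatMap symCode)
        have hr : rOf (some v) = ⟨v.val + 2, by have := v.isLt; omega⟩ := rfl
        rw [hr]
        refine hiter.trans ?_
        rw [hT1]
        simp [liftC, pend, symCode, List.flatMap_append, huo]

def GoodCfg (d : (cTM T p).Cfg) : Prop :=
  (∃ i : Fin (p.length + 1), d.st = mkP T p i ∧ d.ip = 0 ∧ d.wp = 0 ∧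
    d.w = fun _ => T.blank) ∨
  (∃ (t : ℕ) (r : Fin (m + 2)), d.st = mkS T p (T.run x t).st r ∧
    d.ip = (T.run x t).ip ∧ d.wp = (T.run x t).wp ∧ d.w = (T.run x t).w)

lemma cTM_good (t' : ℕ) : GoodCfg T p x ((cTM T p).run x t') := by
  induction t' with
  | zero => exact Or.inl ⟨0, rfl, rfl, rfl, rfl⟩
  | succ t' ih =>
    rw [TransTM.run_succ]
    rcases hd : (cTM T p).run x t' with ⟨st, ip, wp, w, o⟩
    rw [hd] at ih
    rcases ih with ⟨i, hst, hip, hwp, hw⟩ | ⟨t, r, hst, hip, hwp, hw⟩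
    · simp only at hst hip hwp hw
      subst hst hip hwp hw
      by_cases h : (i : ℕ) < p.length
      · rw [cTM_step_emit T p x i h]
        exact Or.inl ⟨_, rfl, rfl, rfl, rfl⟩
      · rw [cTM_step_start T p x i h]
        exact Or.inr ⟨0, 0, rfl, rfl, rfl, rfl⟩
    · simp only at hst hip hwp hw
      subst hst hip hwp hw
      by_cases hr : (r : ℕ) = 0
      · have hr0 : r = 0 := Fin.ext hr
        subst hr0
        by_cases hh : (T.run x t).st ∈ T.qhalt
        · rw [cTM_step_halt T p x _ hh]
          exact Or.inr ⟨t, 0, rfl, rfl, rfl, rfl⟩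
        · rw [cTM_step_sim T p x _ hh]
          right
          refine ⟨t + 1, rOf (T.δ (T.run x t).st (inAt x (T.run x t).ip)
            ((T.run x t).w (T.run x t).wp)).out, ?_, ?_, ?_, ?_⟩ <;>
            rw [TransTM.run_succ, TransTM.step, if_neg hh] <;> rfl
      · rw [cTM_step_flush T p x _ r hr _ _ (TransTM.ip_le T x t) _ _]
        exact Or.inr ⟨t, _, rfl, rfl, rfl, rfl⟩

theorem comp_InFL {f : List α → List (Fin m)} (hcmp : T.Computes f)
    (hp : T.PolyTime) (hl : T.LogSpace) :
    InFL (fun x => p ++ (f x).flatMap symCode) := by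
  refine ⟨cTM T p, ?_, ?_, ?_⟩
  · intro x
    obtain ⟨t, hh, hout⟩ := hcmp x
    obtain ⟨t', -, heq⟩ := cTM_sync T p x t
    refine ⟨t', ?_, ?_⟩
    · rw [heq]
      show mkS T p _ _ ∈ _
      rw [mem_cHalt]
      exact ⟨hh, rfl⟩
    · rw [heq]
      show p ++ _ = _
      rw [hout]
  · obtain ⟨c, hcp⟩ := hp
    refine ⟨(m + 2) * c + (m + 2) * c + p.length + 1, fun x => ?_⟩
    set C := (m + 2) * c + (m + 2) * c + p.length + 1 with hC
    obtain ⟨t, ht, hh⟩ := hcp x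
    obtain ⟨t', ht', heq⟩ := cTM_sync T p x t
    refine ⟨t', ?_, ?_⟩
    · have key : (m + 2) * c * x.length ^ c ≤ C * x.length ^ C := by
        rcases Nat.eq_zero_or_pos c with rfl | hc0
        · simp
        · rcases Nat.eq_zero_or_pos x.length with hn | hn
          · rw [hn, Nat.zero_pow hc0, Nat.mul_zero]
            exact Nat.zero_le _
          · exact Nat.mul_le_mul (by nlinarith) (Nat.pow_le_pow_right hn (by nlinarith))
      calc t' ≤ p.length + 1 + (m + 2) * t := ht'
        _ ≤ p.length + 1 + (m + 2) * (c * x.length ^ c + c) := by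
            have := Nat.mul_le_mul_left (m + 2) ht
            omega
        _ ≤ C * x.length ^ C + C := by nlinarith [key]
    · rw [heq]
      show mkS T p _ _ ∈ _
      rw [mem_cHalt]
      exact ⟨hh, rfl⟩
  · obtain ⟨c, hlc⟩ := hl
    refine ⟨c + 1, fun x t' => ?_⟩
    rcases cTM_good T p x t' with ⟨i, -, -, hwp, -⟩ | ⟨t, r, -, -, hwp, -⟩
    · rw [hwp]
      have : 0 ≤ (c + 1) * Nat.log 2 x.length := Nat.zero_le _
      omega
    · rw [hwp]
      have h1 := hlc x t
      have h2 : c * Nat.log 2 x.length ≤ (c + 1) * Nat.log 2 x.length :=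
        Nat.mul_le_mul_right _ (Nat.le_succ c)
      omega

end Compose

end SDAP

open SDAP in
/-- For every `k ≥ 2`, `MEMB_k` is hard for `kSDA` under
logarithmic-space many-one reductions, and hence hard for `LOGkSDA`. -/
theorem MEMB_hard (k : ℕ) (hk : 2 ≤ k) :
    ∃ enc : (a : ℕ) → SDA k (Fin a) → List (Fin a) → List Bool,
      EncInjective enc ∧
      (∀ (a : ℕ) (L : Language (Fin a)), L ∈ kSDA k (Fin a) → LmRed L (MEMB k enc)) ∧
      (∀ (a : ℕ) (L : Language (Fin a)), L ∈ LOGkSDA k (Fin a) → LmRed L (MEMB k enc)) := by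
  classical
  refine ⟨encFix k, encFix_injective k, ?_, ?_⟩
  · intro a L hL
    obtain ⟨M, hwf, hds, hrec⟩ := hL
    refine ⟨fun x => encFix k a M x, ?_, ?_⟩
    · have h := comp_InFL (idTM a)
        (List.replicate (machIdx k ⟨a, M⟩) true ++ [false, false])
        (idTM_computes a) (idTM_polyTime a) (idTM_logSpace a)
      have he : (fun x : List (Fin a) =>
          (List.replicate (machIdx k ⟨a, M⟩) true ++ [false, false]) ++
            (id x).flatMap symCode) = fun x => encFix k a M x := by
        funext x
        simp [encFix, List.append_assoc]
      rwa [he] at h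
    · intro x
      exact (hrec x).1.trans (mem_MEMB_iff hwf hds x).symm
  · intro a L hL
    obtain ⟨m, B, ⟨M, hwf, hds, hrec⟩, f, ⟨Tf, hTfc, hTfp, hTfl⟩, hred⟩ := hL
    refine ⟨fun x => encFix k m M (f x), ?_, ?_⟩
    · have h := comp_InFL Tf
        (List.replicate (machIdx k ⟨m, M⟩) true ++ [false, false]) hTfc hTfp hTfl
      have he : (fun x : List (Fin a) =>
          (List.replicate (machIdx k ⟨m, M⟩) true ++ [false, false]) ++
            (f x).flatMap symCode) = fun x => encFix k m M (f x) := by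
        funext x
        simp [encFix, List.append_assoc]
      rwa [he] at h
    · intro x
      exact (hred x).trans ((hrec (f x)).1.trans (mem_MEMB_iff hwf hds (f x)).symm)
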